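/- For an odd prime p and i >= 1, the complemented cycling register CCR_n with n = 2^i * p generates exactly 2^{2^i - i - 1} self-dual sequences of period 2^{i+1} and exactly (2^{2^i p} - 2^{2^i}) / (2^{i+1} p) self-dual sequences of period 2^{i+1} p. -/

import Mathlib

/-- `d` is a period of the sequence `s`. -/
def IsPeriodOf (s : ℕ → ZMod 2) (d : ℕ) : Prop := ∀ i, s (i + d) = s i

/-- `d` is the least (exact) period of `s`. -/
def IsLeastPeriod (s : ℕ → ZMod 2) (d : ℕ) : Prop :=
  0 < d ∧ IsPeriodOf s d ∧ ∀ e, 0 < e → IsPeriodOf s e → d ≤ e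

/-- The number of self-dual binary cyclic sequences (counted up to cyclic shift)
of least period exactly `d`: a self-dual sequence of period `d` satisfies
`s (j + d/2) = s j + 1` for all `j`.  These are exactly the cycles of `CCR_n`
for each `n` with `d ∣ 2n` and `d ∤ n`. -/
noncomputable def SD (d : ℕ) : ℕ :=
  Nat.card {O : Set (ℕ → ZMod 2) // ∃ s : ℕ → ZMod 2,
    IsLeastPeriod s d ∧ (∀ j, s (j + d / 2) = s j + 1) ∧
    O = {t | ∃ k : ℕ, ∀ i, t i = s (i + k)}}

namespace SDaux

/-! ### Basic period lemmas -/

lemma period_mul {s : ℕ → ZMod 2} {d : ℕ} (h : IsPeriodOf s d) (k : ℕ) :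
    IsPeriodOf s (d * k) := by
  induction k with
  | zero => intro i; simp
  | succ n ih => intro i; rw [Nat.mul_succ, ← Nat.add_assoc, h, ih]

lemma period_of_dvd {s : ℕ → ZMod 2} {a b : ℕ} (h : IsPeriodOf s a)
    (hab : a ∣ b) : IsPeriodOf s b := by
  obtain ⟨k, rfl⟩ := hab
  exact period_mul h k

lemma period_mod {s : ℕ → ZMod 2} {a b : ℕ} (ha : IsPeriodOf s a)
    (hb : IsPeriodOf s b) : IsPeriodOf s (b % a) := by
  intro i
  have h1 : i + b % a + a * (b / a) = i + b := by
    rw [Nat.add_assoc, Nat.mod_add_div]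
  have := period_mul ha (b / a) (i + b % a)
  rw [h1, hb] at this
  exact this.symm

lemma period_gcd {s : ℕ → ZMod 2} : ∀ (a : ℕ) {b : ℕ}, IsPeriodOf s a →
    IsPeriodOf s b → IsPeriodOf s (Nat.gcd a b) := by
  intro a
  induction a using Nat.strong_induction_on with
  | _ a ih =>
    intro b ha hb
    rcases Nat.eq_zero_or_pos a with h0 | h0
    · subst h0; simpa using hb
    · rw [Nat.gcd_rec]
      exact ih (b % a) (Nat.mod_lt _ h0) (period_mod ha hb) ha

lemma exists_least {s : ℕ → ZMod 2} {d : ℕ} (hd : 0 < d) (h : IsPeriodOf s d) :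
    ∃ e, IsLeastPeriod s e := by
  classical
  have hne : ∃ e, 0 < e ∧ IsPeriodOf s e := ⟨d, hd, h⟩
  refine ⟨Nat.find hne, (Nat.find_spec hne).1, (Nat.find_spec hne).2, ?_⟩
  intro e he hpe
  exact Nat.find_min' hne ⟨he, hpe⟩

lemma least_dvd {s : ℕ → ZMod 2} {e d : ℕ} (he : IsLeastPeriod s e)
    (hd0 : 0 < d) (hd : IsPeriodOf s d) : e ∣ d := by
  have hg := period_gcd e he.2.1 hd
  have hgpos : 0 < Nat.gcd e d := Nat.gcd_pos_of_pos_left _ he.1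
  have h1 : e ≤ Nat.gcd e d := he.2.2 _ hgpos hg
  have h2 : Nat.gcd e d ≤ e := Nat.le_of_dvd he.1 (Nat.gcd_dvd_left _ _)
  have h3 : Nat.gcd e d = e := le_antisymm h2 h1
  rw [← h3]; exact Nat.gcd_dvd_right _ _

lemma period_of_eventually {s : ℕ → ZMod 2} {d : ℕ} (hd0 : 0 < d)
    (hd : IsPeriodOf s d) {e k : ℕ} (h : ∀ j, s (j + k + e) = s (j + k)) :
    IsPeriodOf s e := by
  intro i
  have hk : i + d * k = (i + d * k - k) + k := by
    have : k ≤ d * k := Nat.le_mul_of_pos_left k hd0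
    omega
  have h2 := h (i + d * k - k)
  rw [← hk] at h2
  have h3 := period_mul hd k (i + e)
  have h4 := period_mul hd k i
  rw [show i + e + d * k = i + d * k + e by ring] at h3
  rw [← h3, ← h4]
  exact h2

/-! ### Self-dual (complementing) sequences -/

def Dual (h : ℕ) (s : ℕ → ZMod 2) : Prop := ∀ j, s (j + h) = s j + 1

lemma dual_rep {h : ℕ} (hh : 0 < h) {s : ℕ → ZMod 2} (hs : Dual h s) :
    ∀ i, s i = s (i % h) + ((i / h : ℕ) : ZMod 2) := by
  intro i
  induction i using Nat.strong_induction_on with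
  | _ i ih =>
    rcases Nat.lt_or_ge i h with hlt | hge
    · rw [Nat.mod_eq_of_lt hlt, Nat.div_eq_of_lt hlt]; simp
    · have h1 : i = (i - h) + h := by omega
      have h2 := hs (i - h)
      rw [← h1] at h2
      have h3 := ih (i - h) (by omega)
      have h4 : (i - h) % h = i % h := by
        conv_rhs => rw [h1]
        rw [Nat.add_mod_right]
      have h5 : i / h = (i - h) / h + 1 := by
        conv_lhs => rw [h1]
        rw [Nat.add_div_right _ hh]
      rw [h2, h3, h4, h5]
      push_cast
      ring

noncomputable def dualEquiv (h : ℕ) (hh : 0 < h) :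
    {s : ℕ → ZMod 2 // Dual h s} ≃ (Fin h → ZMod 2) where
  toFun s := fun j => s.1 j
  invFun f := ⟨fun i => f ⟨i % h, Nat.mod_lt _ hh⟩ + ((i / h : ℕ) : ZMod 2), by
    intro j
    have h1 : (j + h) % h = j % h := Nat.add_mod_right _ _
    have h2 : (j + h) / h = j / h + 1 := Nat.add_div_right _ hh
    simp only [h1, h2]
    push_cast
    ring⟩
  left_inv s := by
    ext i
    have := dual_rep hh s.2 i
    simp only [this]
  right_inv f := by
    ext j
    simp [Nat.mod_eq_of_lt j.2, Nat.div_eq_of_lt j.2]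

lemma card_dual (h : ℕ) (hh : 0 < h) :
    Nat.card {s : ℕ → ZMod 2 // Dual h s} = 2 ^ h := by
  rw [Nat.card_congr (dualEquiv h hh)]
  simp [Nat.card_eq_fintype_card]

lemma finite_dual (h : ℕ) (hh : 0 < h) : Finite {s : ℕ → ZMod 2 // Dual h s} :=
  Finite.of_equiv _ (dualEquiv h hh).symm

lemma dual_period {h : ℕ} {s : ℕ → ZMod 2} (hs : Dual h s) :
    IsPeriodOf s (2 * h) := by
  intro i
  have h1 := hs i
  have h2 := hs (i + h)
  rw [show i + 2 * h = i + h + h by ring, h2, h1]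
  ring_nf
  rw [show (2 : ZMod 2) = 0 by decide]
  ring

lemma dual_mul {h : ℕ} {s : ℕ → ZMod 2} (hs : Dual h s) (k : ℕ) :
    ∀ j, s (j + h * k) = s j + (k : ZMod 2) := by
  induction k with
  | zero => intro j; simp
  | succ n ih =>
    intro j
    rw [Nat.mul_succ, ← Nat.add_assoc, hs, ih]
    push_cast
    ring

lemma not_period_of_dual {h : ℕ} {s : ℕ → ZMod 2} (hs : Dual h s) :
    ¬ IsPeriodOf s h := by
  intro hp
  have h1 := hs 0
  rw [hp 0] at h1
  have h2 : (1 : ZMod 2) = 0 := by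
    conv_lhs at h1 => rw [show s 0 = s 0 + 0 by ring]
    exact (add_left_cancel h1).symm
  exact one_ne_zero h2

/-! ### Shifts and orbits -/

def Shift (k : ℕ) (s : ℕ → ZMod 2) : ℕ → ZMod 2 := fun i => s (i + k)

def orbit (s : ℕ → ZMod 2) : Set (ℕ → ZMod 2) :=
  {t | ∃ k : ℕ, ∀ i, t i = s (i + k)}

lemma mem_orbit_self (s : ℕ → ZMod 2) : s ∈ orbit s := ⟨0, fun i => by simp⟩

lemma isPeriod_shift {s : ℕ → ZMod 2} {d : ℕ} (h : IsPeriodOf s d) (k : ℕ) :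
    IsPeriodOf (Shift k s) d := by
  intro i
  show s (i + d + k) = s (i + k)
  rw [show i + d + k = i + k + d by ring, h]

lemma isLeast_shift {s : ℕ → ZMod 2} {d : ℕ} (h : IsLeastPeriod s d) (k : ℕ) :
    IsLeastPeriod (Shift k s) d := by
  refine ⟨h.1, isPeriod_shift h.2.1 k, ?_⟩
  intro e he hpe
  refine h.2.2 e he (period_of_eventually h.1 h.2.1 (k := k) ?_)
  intro j
  have := hpe j
  show s (j + k + e) = s (j + k)
  rw [show j + k + e = j + e + k by ring]
  exact this

lemma shift_mod {s : ℕ → ZMod 2} {d : ℕ} (hp : IsPeriodOf s d) (k : ℕ) :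
    Shift k s = Shift (k % d) s := by
  funext i
  show s (i + k) = s (i + k % d)
  conv_lhs => rw [show k = k % d + d * (k / d) from (Nat.mod_add_div _ _).symm]
  rw [← Nat.add_assoc]
  exact period_mul hp (k / d) (i + k % d)

lemma shift_inj_aux {s : ℕ → ZMod 2} {d : ℕ} (h : IsLeastPeriod s d)
    {k k' : ℕ} (hle : k ≤ k') (hk' : k' < d) (he : Shift k s = Shift k' s) :
    k = k' := by
  by_contra hne
  have hepos : 0 < k' - k := by omega
  have hper : IsPeriodOf s (k' - k) := by
    refine period_of_eventually h.1 h.2.1 (k := k) ?_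
    intro j
    have := congrFun he j
    show s (j + k + (k' - k)) = s (j + k)
    rw [show j + k + (k' - k) = j + k' by omega]
    exact this.symm
  have := h.2.2 _ hepos hper
  omega

lemma shift_inj {s : ℕ → ZMod 2} {d : ℕ} (h : IsLeastPeriod s d)
    {k k' : ℕ} (hk : k < d) (hk' : k' < d) (he : Shift k s = Shift k' s) :
    k = k' := by
  rcases le_total k k' with hle | hle
  · exact shift_inj_aux h hle hk' he
  · exact (shift_inj_aux h hle hk he.symm).symm

lemma orbit_shift {s : ℕ → ZMod 2} {d : ℕ} (hd : 0 < d) (hp : IsPeriodOf s d)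
    (k : ℕ) : orbit (Shift k s) = orbit s := by
  ext t
  constructor
  · rintro ⟨m, hm⟩
    exact ⟨m + k, fun i => by rw [hm i, ← Nat.add_assoc]; rfl⟩
  · rintro ⟨m, hm⟩
    have hkd : k ≤ d * k := Nat.le_mul_of_pos_left k hd
    refine ⟨m + d * k - k, fun i => ?_⟩
    show t i = s (i + (m + d * k - k) + k)
    rw [show i + (m + d * k - k) + k = i + m + d * k by omega]
    rw [period_mul hp k (i + m)]
    exact hm i

/-! ### The central counting theorem: each orbit of self-dual sequences of
least period `d` contains exactly `d` sequences. -/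

theorem card_least_dual (d : ℕ) (hd : 0 < d) :
    Nat.card {s : ℕ → ZMod 2 //
      IsLeastPeriod s d ∧ ∀ j, s (j + d / 2) = s j + 1} = SD d * d := by
  classical
  set A := {s : ℕ → ZMod 2 //
      IsLeastPeriod s d ∧ ∀ j, s (j + d / 2) = s j + 1} with hA
  set β := {O : Set (ℕ → ZMod 2) // ∃ s : ℕ → ZMod 2,
    IsLeastPeriod s d ∧ (∀ j, s (j + d / 2) = s j + 1) ∧ O = orbit s} with hβ
  let pick : β → (ℕ → ZMod 2) := fun O => O.2.choose
  have pick1 : ∀ O : β, IsLeastPeriod (pick O) d := fun O => O.2.choose_spec.1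
  have pick2 : ∀ O : β, ∀ j, (pick O) (j + d / 2) = pick O j + 1 :=
    fun O => O.2.choose_spec.2.1
  have pick3 : ∀ O : β, O.1 = orbit (pick O) := fun O => O.2.choose_spec.2.2
  let toO : A → β := fun s => ⟨orbit s.1, s.1, s.2.1, s.2.2, rfl⟩
  have hmem : ∀ s : A, ∃ k, ∀ i, s.1 i = pick (toO s) (i + k) := by
    intro s
    have h1 : s.1 ∈ orbit (pick (toO s)) := by
      rw [← pick3 (toO s)]
      exact mem_orbit_self s.1
    exact h1
  let idx : A → ℕ := fun s => Nat.find (hmem s)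
  have hdual : ∀ (O : β) (k : ℕ), ∀ j,
      Shift k (pick O) (j + d / 2) = Shift k (pick O) j + 1 := by
    intro O k j
    show pick O (j + d / 2 + k) = pick O (j + k) + 1
    rw [show j + d / 2 + k = (j + k) + d / 2 by ring]
    exact pick2 O (j + k)
  let F : A → β × Fin d := fun s => (toO s, ⟨idx s % d, Nat.mod_lt _ hd⟩)
  let G : β × Fin d → A := fun x =>
    ⟨Shift x.2.1 (pick x.1), isLeast_shift (pick1 x.1) x.2.1, hdual x.1 x.2.1⟩
  have hLI : ∀ s : A, G (F s) = s := by
    intro s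
    apply Subtype.ext
    funext i
    show pick (toO s) (i + idx s % d) = s.1 i
    have h1 : pick (toO s) (i + idx s) = pick (toO s) (i + idx s % d) :=
      congrFun (shift_mod (pick1 (toO s)).2.1 (idx s)) i
    rw [← h1]
    exact (Nat.find_spec (hmem s) i).symm
  have hRI : ∀ x : β × Fin d, F (G x) = x := by
    rintro ⟨O, k⟩
    set t : A := ⟨Shift k.1 (pick O), isLeast_shift (pick1 O) k.1,
      hdual O k.1⟩ with ht
    have hOeq : toO t = O := by
      apply Subtype.ext
      show orbit (Shift k.1 (pick O)) = O.1
      rw [pick3 O]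
      exact orbit_shift hd (pick1 O).2.1 k.1
    have hp : pick (toO t) = pick O := congrArg pick hOeq
    have hspec : ∀ i, t.1 i = pick O (i + idx t) :=
      fun i => (Nat.find_spec (hmem t) i).trans (congrFun hp (i + idx t))
    have hminle : idx t ≤ k.1 := by
      apply Nat.find_min' (hmem t)
      exact fun i => (congrFun hp (i + k.1)).symm
    have hlt : idx t < d := lt_of_le_of_lt hminle k.2
    have hsh : Shift (idx t) (pick O) = Shift k.1 (pick O) := by
      funext i
      exact (hspec i).symm
    have hk : idx t = k.1 := shift_inj (pick1 O) hlt k.2 hsh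
    show (toO t, (⟨idx t % d, Nat.mod_lt _ hd⟩ : Fin d)) = (O, k)
    refine Prod.ext hOeq (Fin.ext ?_)
    show idx t % d = k.1
    rw [hk, Nat.mod_eq_of_lt k.2]
  have e : A ≃ β × Fin d := ⟨F, G, hLI, hRI⟩
  rw [Nat.card_congr e, Nat.card_prod, Nat.card_eq_fintype_card (α := Fin d),
    Fintype.card_fin]
  rfl

/-! ### Case analysis lemmas -/

lemma odd_cast {p : ℕ} (hodd : Odd p) : (p : ZMod 2) = 1 := by
  obtain ⟨c, rfl⟩ := hodd
  push_cast
  rw [show (2 : ZMod 2) = 0 by decide]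
  ring

lemma least_of_dual_pow {i : ℕ} {s : ℕ → ZMod 2} (hs : Dual (2 ^ i) s) :
    IsLeastPeriod s (2 ^ (i + 1)) := by
  have hpow : (2 : ℕ) ^ (i + 1) = 2 * 2 ^ i := by ring
  have hper : IsPeriodOf s (2 ^ (i + 1)) := by rw [hpow]; exact dual_period hs
  refine ⟨pow_pos (by norm_num) _, hper, ?_⟩
  intro e he hpe
  obtain ⟨e₀, he₀⟩ := exists_least he hpe
  have hdvd1 : e₀ ∣ 2 ^ (i + 1) :=
    least_dvd he₀ (pow_pos (by norm_num) _) hper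
  obtain ⟨a, ha, rfl⟩ := (Nat.dvd_prime_pow Nat.prime_two).mp hdvd1
  have ha' : a = i + 1 := by
    by_contra hne
    have hai : a ≤ i := by omega
    have : IsPeriodOf s (2 ^ i) :=
      period_of_dvd he₀.2.1 (pow_dvd_pow 2 hai)
    exact not_period_of_dual hs this
  rw [ha'] at he₀
  exact he₀.2.2 e he hpe

lemma div_lemma {p i e : ℕ} (hp : p.Prime) (hodd : Odd p)
    (h1 : e ∣ 2 ^ (i + 1) * p) (h2 : ¬ e ∣ 2 ^ i * p) :
    e = 2 ^ (i + 1) ∨ e = 2 ^ (i + 1) * p := by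
  obtain ⟨k, hk⟩ := h1
  have hkodd : ¬ 2 ∣ k := by
    rintro ⟨k', rfl⟩
    apply h2
    refine ⟨k', ?_⟩
    have h3 : 2 * (2 ^ i * p) = 2 * (e * k') := by
      rw [show 2 * (e * k') = e * (2 * k') by ring, ← hk]; ring
    omega
  have he2 : 2 ∣ e := by
    have hd : 2 ∣ e * k := by
      rw [← hk]
      exact ⟨2 ^ i * p, by ring⟩
    rcases (Nat.Prime.dvd_mul Nat.prime_two).mp hd with h | h
    · exact h
    · exact absurd h hkodd
  obtain ⟨e', rfl⟩ := he2
  have hek : 2 ^ i * p = e' * k := by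
    have h3 : 2 * (2 ^ i * p) = 2 * (e' * k) := by
      rw [show 2 * (e' * k) = 2 * e' * k by ring, ← hk]; ring
    omega
  have hcop : Nat.Coprime (2 ^ i) k :=
    Nat.Coprime.pow_left i ((Nat.Prime.coprime_iff_not_dvd Nat.prime_two).mpr hkodd)
  have h2i : 2 ^ i ∣ e' := by
    apply Nat.Coprime.dvd_of_dvd_mul_right hcop
    exact ⟨p, hek.symm⟩
  obtain ⟨m, rfl⟩ := h2i
  have hpmk : p = m * k := by
    have h2ipos : 0 < 2 ^ i := pow_pos (by norm_num) _
    have : 2 ^ i * p = 2 ^ i * (m * k) := by rw [hek]; ring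
    exact Nat.eq_of_mul_eq_mul_left h2ipos this
  rcases (Nat.Prime.eq_one_or_self_of_dvd hp m ⟨k, hpmk⟩) with rfl | rfl
  · left; ring
  · right; ring

lemma least_of_dual_b {p i : ℕ} (hp : p.Prime) (hodd : Odd p)
    {s : ℕ → ZMod 2} (hs : Dual (2 ^ i * p) s) (hns : ¬ Dual (2 ^ i) s) :
    IsLeastPeriod s (2 ^ (i + 1) * p) := by
  have hppos : 0 < p := hp.pos
  have hdpos : 0 < 2 ^ (i + 1) * p :=
    Nat.mul_pos (pow_pos (by norm_num) _) hppos
  have hper : IsPeriodOf s (2 ^ (i + 1) * p) := by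
    have := dual_period hs
    have heq : 2 * (2 ^ i * p) = 2 ^ (i + 1) * p := by ring
    rwa [heq] at this
  refine ⟨hdpos, hper, ?_⟩
  intro e he hpe
  obtain ⟨e₀, he₀⟩ := exists_least he hpe
  have hdvd1 : e₀ ∣ 2 ^ (i + 1) * p := least_dvd he₀ hdpos hper
  have hndvd : ¬ e₀ ∣ 2 ^ i * p := by
    intro hdvd
    exact not_period_of_dual hs (period_of_dvd he₀.2.1 hdvd)
  rcases div_lemma hp hodd hdvd1 hndvd with h | h
  · exfalso
    apply hns
    intro j
    obtain ⟨c, hc⟩ := hodd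
    have hper2 : IsPeriodOf s (2 ^ (i + 1)) := h ▸ he₀.2.1
    have h1 : s (j + 2 ^ i * p) = s j + 1 := hs j
    have h2 : j + 2 ^ i * p = (j + 2 ^ i) + 2 ^ (i + 1) * c := by
      subst hc; ring
    have h3 := period_mul hper2 c (j + 2 ^ i)
    rw [h2, h3] at h1
    exact h1
  · rw [h] at he₀
    exact he₀.2.2 e he hpe

lemma not_least_of_dual2 {p i : ℕ} (hp : 2 ≤ p) {s : ℕ → ZMod 2}
    (hs2 : Dual (2 ^ i) s) : ¬ IsLeastPeriod s (2 ^ (i + 1) * p) := by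
  intro hl
  have hper : IsPeriodOf s (2 ^ (i + 1)) := by
    have := dual_period hs2
    rwa [show 2 * 2 ^ i = 2 ^ (i + 1) by ring] at this
  have := hl.2.2 _ (pow_pos (by norm_num) _) hper
  have hlt : 2 ^ (i + 1) < 2 ^ (i + 1) * p := by
    have h0 : 0 < 2 ^ (i + 1) := pow_pos (by norm_num) _
    nlinarith
  omega

lemma dual2_imp_dual {p i : ℕ} (hodd : Odd p) {s : ℕ → ZMod 2}
    (hs : Dual (2 ^ i) s) : Dual (2 ^ i * p) s := by
  intro j
  have := dual_mul hs p j
  rwa [odd_cast hodd] at this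

/-! ### Cardinality computations for the two cases -/

lemma cardA (i : ℕ) :
    Nat.card {s : ℕ → ZMod 2 // IsLeastPeriod s (2 ^ (i + 1)) ∧
      ∀ j, s (j + 2 ^ (i + 1) / 2) = s j + 1} = 2 ^ 2 ^ i := by
  have hhalf : (2 : ℕ) ^ (i + 1) / 2 = 2 ^ i := by
    rw [pow_succ]
    exact Nat.mul_div_cancel _ (by norm_num)
  rw [hhalf]
  have e : {s : ℕ → ZMod 2 // IsLeastPeriod s (2 ^ (i + 1)) ∧
      ∀ j, s (j + 2 ^ i) = s j + 1} ≃ {s : ℕ → ZMod 2 // Dual (2 ^ i) s} := by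
    apply Equiv.subtypeEquivRight
    intro s
    constructor
    · exact fun h => h.2
    · exact fun h => ⟨least_of_dual_pow h, h⟩
  rw [Nat.card_congr e, card_dual _ (pow_pos (by norm_num) _)]

lemma cardB (p i : ℕ) (hp : p.Prime) (hodd : Odd p) :
    Nat.card {s : ℕ → ZMod 2 // IsLeastPeriod s (2 ^ (i + 1) * p) ∧
      ∀ j, s (j + 2 ^ (i + 1) * p / 2) = s j + 1} + 2 ^ 2 ^ i
      = 2 ^ (2 ^ i * p) := by
  classical
  have hhalf : (2 : ℕ) ^ (i + 1) * p / 2 = 2 ^ i * p := by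
    rw [pow_succ, show 2 ^ i * 2 * p = 2 * (2 ^ i * p) by ring]
    exact Nat.mul_div_cancel_left _ (by norm_num)
  rw [hhalf]
  have hppos : 0 < p := hp.pos
  have hhpos : 0 < 2 ^ i * p :=
    Nat.mul_pos (pow_pos (by norm_num) _) hppos
  haveI : Finite {s : ℕ → ZMod 2 // Dual (2 ^ i * p) s} := finite_dual _ hhpos
  -- split the full dual set according to whether `Dual (2^i)` holds
  have eq1 : {x : {s : ℕ → ZMod 2 // Dual (2 ^ i * p) s} // ¬ Dual (2 ^ i) x.1} ≃
      {s : ℕ → ZMod 2 // IsLeastPeriod s (2 ^ (i + 1) * p) ∧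
        ∀ j, s (j + 2 ^ i * p) = s j + 1} := by
    refine (Equiv.subtypeSubtypeEquivSubtypeInter (fun s => Dual (2 ^ i * p) s)
      (fun s => ¬ Dual (2 ^ i) s)).trans (Equiv.subtypeEquivRight ?_)
    intro s
    constructor
    · rintro ⟨h1, h2⟩
      exact ⟨least_of_dual_b hp hodd h1 h2, h1⟩
    · rintro ⟨h1, h2⟩
      refine ⟨h2, fun hd2 => ?_⟩
      exact not_least_of_dual2 hp.two_le hd2 h1
  have eq2 : {x : {s : ℕ → ZMod 2 // Dual (2 ^ i * p) s} // ¬¬ Dual (2 ^ i) x.1} ≃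
      {s : ℕ → ZMod 2 // Dual (2 ^ i) s} := by
    refine (Equiv.subtypeSubtypeEquivSubtypeInter (fun s => Dual (2 ^ i * p) s)
      (fun s => ¬¬ Dual (2 ^ i) s)).trans (Equiv.subtypeEquivRight ?_)
    intro s
    simp only [not_not]
    constructor
    · rintro ⟨h1, h2⟩
      exact h2
    · intro h
      exact ⟨dual2_imp_dual hodd h, h⟩
  haveI : Finite {s : ℕ → ZMod 2 // IsLeastPeriod s (2 ^ (i + 1) * p) ∧
      ∀ j, s (j + 2 ^ i * p) = s j + 1} := Finite.of_equiv _ eq1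
  haveI : Finite {s : ℕ → ZMod 2 // Dual (2 ^ i) s} := Finite.of_equiv _ eq2
  have e : {s : ℕ → ZMod 2 // Dual (2 ^ i * p) s} ≃
      {s : ℕ → ZMod 2 // IsLeastPeriod s (2 ^ (i + 1) * p) ∧
        ∀ j, s (j + 2 ^ i * p) = s j + 1} ⊕
      {s : ℕ → ZMod 2 // Dual (2 ^ i) s} :=
    (Equiv.sumCompl (fun x : {s : ℕ → ZMod 2 // Dual (2 ^ i * p) s} =>
      ¬ Dual (2 ^ i) x.1)).symm.trans (Equiv.sumCongr eq1 eq2)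
  have hcards := Nat.card_congr e
  rw [Nat.card_sum, card_dual _ hhpos,
    card_dual _ (pow_pos (by norm_num) i)] at hcards
  exact hcards.symm

end SDaux

open SDaux in
/-- For an odd prime `p` and `i ≥ 1`, the register `CCR_n` with `n = 2^i p`
generates exactly `2^{2^i - i - 1}` self-dual sequences of period `2^{i+1}` and
exactly `(2^{2^i p} - 2^{2^i}) / (2^{i+1} p)` self-dual sequences of period
`2^{i+1} p` (the cycles of `CCR_n` being exactly the self-dual sequences of
least period `d` with `d ∣ 2n`, `d ∤ n`, i.e. `d = 2^{i+1}` or `d = 2^{i+1} p`). -/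
theorem stmt11 (p i : ℕ) (hp : p.Prime) (hodd : Odd p) (hi : 1 ≤ i) :
    SD (2 ^ (i + 1)) = 2 ^ (2 ^ i - i - 1) ∧
    SD (2 ^ (i + 1) * p) * (2 ^ (i + 1) * p) = 2 ^ (2 ^ i * p) - 2 ^ 2 ^ i := by
  constructor
  · have h1 := card_least_dual (2 ^ (i + 1)) (pow_pos (by norm_num) _)
    rw [cardA i] at h1
    have hle : i + 1 ≤ 2 ^ i := Nat.lt_two_pow_self (n := i)
    have h2 : (2 : ℕ) ^ 2 ^ i = 2 ^ (2 ^ i - i - 1) * 2 ^ (i + 1) := by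
      rw [← pow_add]
      congr 1
      omega
    rw [h2] at h1
    exact Nat.eq_of_mul_eq_mul_right (pow_pos (by norm_num) _) h1.symm
  · have hdpos : 0 < 2 ^ (i + 1) * p :=
      Nat.mul_pos (pow_pos (by norm_num) _) hp.pos
    have h1 := card_least_dual (2 ^ (i + 1) * p) hdpos
    have h2 := cardB p i hp hodd
    rw [← h1, ← h2, Nat.add_sub_cancel]
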